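/- The 5-dimensional free 3-step nilpotent Lie algebra n_{2,3} on two generators admits an ad-invariant nondegenerate symmetric bilinear form. Concretely, with basis e_1,…,e_5 and brackets [e_1,e_2]=e_3, [e_1,e_3]=e_4, [e_2,e_3]=e_5, the symmetric bilinear form B with B(e_1,e_5)=1, B(e_2,e_4)=−1, B(e_3,e_3)=1, and all other pairings of basis vectors zero, is nondegenerate and satisfies B([x,y],z) = −B(y,[x,z]) for all x,y,z. -/

import Mathlib

set_option maxHeartbeats 1000000


/-- The free 3-step nilpotent Lie algebra on two generators n_{2,3} admits an
ad-invariant nondegenerate symmetric bilinear form, concretely given on the basis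
e₁,…,e₅ by B(e₁,e₅)=1, B(e₂,e₄)=−1, B(e₃,e₃)=1, all other pairings zero. -/
theorem n23_admits_ad_invariant_metric
    {K L : Type*} [Field K] [CharZero K] [LieRing L] [LieAlgebra K L]
    [FiniteDimensional K L]
    (b : Module.Basis (Fin 5) K L)
    (h12 : ⁅b 0, b 1⁆ = b 2) (h13 : ⁅b 0, b 2⁆ = b 3) (h23 : ⁅b 1, b 2⁆ = b 4)
    (hz : ∀ i j : Fin 5, 3 ≤ j.val → ⁅b i, b j⁆ = 0) :
    ∃ B : L →ₗ[K] L →ₗ[K] K,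
      (∀ x y : L, B x y = B y x) ∧
      (∀ x : L, (∀ y : L, B x y = 0) → x = 0) ∧
      (∀ x y z : L, B ⁅x, y⁆ z = - B y ⁅x, z⁆) ∧
      (∀ i j : Fin 5, B (b i) (b j) =
        (!![0, 0, 0, 0, 1;
            0, 0, 0, -1, 0;
            0, 0, 1, 0, 0;
            0, -1, 0, 0, 0;
            1, 0, 0, 0, 0] : Matrix (Fin 5) (Fin 5) K) i j) := by
  set M : Matrix (Fin 5) (Fin 5) K :=
    !![0, 0, 0, 0, 1; 0, 0, 0, -1, 0; 0, 0, 1, 0, 0; 0, -1, 0, 0, 0; 1, 0, 0, 0, 0] with hM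
  set B : L →ₗ[K] L →ₗ[K] K := Matrix.toLinearMap₂ b b M with hBdef
  have hB : ∀ i j, B (b i) (b j) = M i j := fun i j => by
    rw [hBdef, ← LinearMap.toMatrix₂_apply b b, LinearMap.toMatrix₂_toLinearMap₂]
  -- bracket table
  have h10 : ⁅b 1, b 0⁆ = -(b 2) := by rw [← lie_skew, h12]
  have h20 : ⁅b 2, b 0⁆ = -(b 3) := by rw [← lie_skew, h13]
  have h21 : ⁅b 2, b 1⁆ = -(b 4) := by rw [← lie_skew, h23]
  have hz' : ∀ i j : Fin 5, 3 ≤ i.val → ⁅b i, b j⁆ = 0 := fun i j h => by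
    rw [← lie_skew, hz j i h, neg_zero]
  have H : ∀ i j : Fin 5, ⁅b i, b j⁆ =
      ![![0, b 2, b 3, 0, 0], ![-(b 2), 0, b 4, 0, 0], ![-(b 3), -(b 4), 0, 0, 0],
        ![0,0,0,0,0], ![0,0,0,0,0]] i j := by
    intro i j
    fin_cases i <;> fin_cases j <;>
      simp [h12, h13, h23, h10, h20, h21,
        hz _ 3 (by decide), hz _ 4 (by decide),
        hz' 3 _ (by decide), hz' 4 _ (by decide), Matrix.vecHead, Matrix.vecTail]
  have key : ∀ i j k : Fin 5, B ⁅b i, b j⁆ (b k) = - B (b j) ⁅b i, b k⁆ := by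
    intro i j k
    fin_cases i <;> fin_cases j <;> fin_cases k <;>
      simp [h12, h13, h23, h10, h20, h21, lie_self,
        hz _ 3 (by decide), hz _ 4 (by decide), hz' 3 _ (by decide), hz' 4 _ (by decide),
        hB, hM, Matrix.vecHead, Matrix.vecTail]
  refine ⟨B, ?_, ?_, ?_, hB⟩
  · -- symmetry
    have : B = B.flip := by
      apply LinearMap.ext_basis b b
      intro i j
      simp only [LinearMap.flip_apply, hB]
      fin_cases i <;> fin_cases j <;> simp [hM, Matrix.vecHead, Matrix.vecTail]
    intro x y; conv_lhs => rw [this]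
    rfl
  · -- nondegeneracy
    intro x hx
    have hcoord : ∀ j : Fin 5, B x (b j) = ∑ i, b.repr x i * M i j := by
      intro j
      conv_lhs => rw [← b.sum_repr x]
      simp [hB, Finset.sum_apply, mul_comm, -Module.Basis.sum_repr]
    have h0 : ∀ j : Fin 5, ∑ i, b.repr x i * M i j = 0 := fun j => by
      rw [← hcoord, hx]
    have hrepr : ∀ i : Fin 5, b.repr x i = 0 := by
      intro i
      fin_cases i
      · have := h0 4; simpa [hM, Fin.sum_univ_five, Matrix.vecHead, Matrix.vecTail] using this
      · have := h0 3; simpa [hM, Fin.sum_univ_five, Matrix.vecHead, Matrix.vecTail] using this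
      · have := h0 2; simpa [hM, Fin.sum_univ_five, Matrix.vecHead, Matrix.vecTail] using this
      · have := h0 1; simpa [hM, Fin.sum_univ_five, Matrix.vecHead, Matrix.vecTail] using this
      · have := h0 0; simpa [hM, Fin.sum_univ_five, Matrix.vecHead, Matrix.vecTail] using this
    have : b.repr x = 0 := by ext i; simpa using hrepr i
    simpa using b.repr.map_eq_zero_iff.mp this
  · -- ad-invariance
    have key2 : ∀ x : L,
        B.comp (LieAlgebra.ad K L x) + B.compl₂ (LieAlgebra.ad K L x) = 0 := by
      let T : L →ₗ[K] (L →ₗ[K] L →ₗ[K] K) :=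
        { toFun := fun x => B.comp (LieAlgebra.ad K L x) + B.compl₂ (LieAlgebra.ad K L x)
          map_add' := by
            intro u v; ext y z
            simp [LieAlgebra.ad_apply, add_lie]
            ring
          map_smul' := by
            intro c u; ext y z
            simp [LieAlgebra.ad_apply, smul_lie] }
      have hT : ∀ x, T x = B.comp (LieAlgebra.ad K L x) + B.compl₂ (LieAlgebra.ad K L x) :=
        fun _ => rfl
      have hT0 : T = 0 := by
        apply b.ext
        intro i
        rw [hT]
        apply LinearMap.ext_basis b b
        intro j k
        simp only [LinearMap.add_apply, LinearMap.comp_apply, LinearMap.compl₂_apply,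
          LieAlgebra.ad_apply, LinearMap.zero_apply]
        rw [key i j k]
        ring
      intro x
      rw [← hT, hT0, LinearMap.zero_apply]
    intro x y z
    have := LinearMap.congr_fun (LinearMap.congr_fun (key2 x) y) z
    simp only [LinearMap.add_apply, LinearMap.comp_apply, LinearMap.compl₂_apply,
      LieAlgebra.ad_apply, LinearMap.zero_apply] at this
    linear_combination this
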